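/- For r ∈ (0,1), the integral ∫₁^∞ (√(1−r²) · √x) / (√r · √(x²−1) · (x²−r²)) dx converges and equals 2√π (√(1−r²)/√r) (Γ(3/4)/Γ(1/4)) ₂F₁(3/4,1,5/4;r²). -/

import Mathlib

open MeasureTheory Real Set

section Aux

lemma betaIoo {a b : ℝ} (ha : 0 < a) (hb : 0 < b) :
    IntegrableOn (fun x : ℝ => x ^ (a - 1) * (1 - x) ^ (b - 1)) (Ioo 0 1) ∧
    ∫ x in Ioo (0:ℝ) 1, x ^ (a - 1) * (1 - x) ^ (b - 1) =
      Real.Gamma a * Real.Gamma b / Real.Gamma (a + b) := by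
  have hconv : IntervalIntegrable
      (fun x : ℝ => (x : ℂ) ^ ((a : ℂ) - 1) * ((1 : ℂ) - x) ^ ((b : ℂ) - 1)) volume 0 1 :=
    Complex.betaIntegral_convergent (by simpa using ha) (by simpa using hb)
  have hIoo : IntegrableOn
      (fun x : ℝ => (x : ℂ) ^ ((a : ℂ) - 1) * ((1 : ℂ) - x) ^ ((b : ℂ) - 1)) (Ioo 0 1) :=
    ((intervalIntegrable_iff_integrableOn_Ioc_of_le zero_le_one).mp hconv).mono_set
      Ioo_subset_Ioc_self
  have key : ∀ x ∈ Ioo (0:ℝ) 1,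
      ((x ^ (a - 1) * (1 - x) ^ (b - 1) : ℝ) : ℂ) =
        (x : ℂ) ^ ((a : ℂ) - 1) * ((1 : ℂ) - x) ^ ((b : ℂ) - 1) := by
    intro x hx
    rw [Complex.ofReal_mul, Complex.ofReal_cpow hx.1.le, Complex.ofReal_cpow (by linarith [hx.2])]
    push_cast
    ring
  have hint : IntegrableOn (fun x : ℝ => x ^ (a - 1) * (1 - x) ^ (b - 1)) (Ioo 0 1) := by
    refine IntegrableOn.congr_fun hIoo.norm (fun x hx => ?_) measurableSet_Ioo
    rw [← key x hx]
    simp only [Complex.norm_real, Real.norm_eq_abs, abs_mul]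
    rw [abs_of_nonneg (rpow_nonneg hx.1.le _),
      abs_of_nonneg (rpow_nonneg (by linarith [hx.2.le] : (0:ℝ) ≤ 1 - x) _)]
  refine ⟨hint, ?_⟩
  have h1 : Complex.Gamma a * Complex.Gamma b =
      Complex.Gamma (a + b) * Complex.betaIntegral a b := by
    have := Complex.Gamma_mul_Gamma_eq_betaIntegral
      (s := (a:ℂ)) (t := (b:ℂ)) (by simpa using ha) (by simpa using hb)
    simpa using this
  have h2 : Complex.betaIntegral a b =
      ((∫ x in Ioo (0:ℝ) 1, x ^ (a-1) * (1-x) ^ (b-1) : ℝ) : ℂ) := by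
    rw [Complex.betaIntegral, intervalIntegral.integral_of_le zero_le_one,
      integral_Ioc_eq_integral_Ioo]
    have : ∫ x in Ioo (0:ℝ) 1, ((x ^ (a-1) * (1-x) ^ (b-1) : ℝ) : ℂ) =
        ((∫ x in Ioo (0:ℝ) 1, x ^ (a-1) * (1-x) ^ (b-1) : ℝ) : ℂ) := integral_ofReal
    rw [← this]
    exact setIntegral_congr_fun measurableSet_Ioo (fun x hx => (key x hx).symm)
  rw [h2, Complex.Gamma_ofReal, Complex.Gamma_ofReal, ← Complex.ofReal_add,
    Complex.Gamma_ofReal, ← Complex.ofReal_mul, ← Complex.ofReal_mul] at h1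
  have := Complex.ofReal_injective h1
  have hG : Real.Gamma (a + b) ≠ 0 := (Real.Gamma_pos_of_pos (by linarith)).ne'
  field_simp
  linarith [this]

lemma sq_image : (fun t : ℝ => t ^ 2) '' Ioo 0 1 = Ioo 0 1 := by
  ext y
  constructor
  · rintro ⟨t, ⟨ht0, ht1⟩, rfl⟩
    refine ⟨by positivity, ?_⟩
    show t ^ 2 < 1
    nlinarith
  · rintro ⟨hy0, hy1⟩
    have h1 : Real.sqrt y < 1 := by
      have := Real.sqrt_lt_sqrt hy0.le hy1
      rwa [Real.sqrt_one] at this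
    exact ⟨Real.sqrt y, ⟨Real.sqrt_pos.mpr hy0, h1⟩, Real.sq_sqrt hy0.le⟩

lemma inv_image : (fun t : ℝ => t⁻¹) '' Ioo 0 1 = Ioi 1 := by
  ext y
  constructor
  · rintro ⟨t, ⟨ht0, ht1⟩, rfl⟩
    exact ((one_lt_inv₀ ht0).mpr ht1 : (1:ℝ) < t⁻¹)
  · intro hy
    have hy0 : (0:ℝ) < y := lt_trans one_pos hy
    exact ⟨y⁻¹, ⟨inv_pos.mpr hy0, inv_lt_one_of_one_lt₀ hy⟩, inv_inv y⟩

lemma Jlem {s : ℝ} (hs : 0 < s) :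
    IntegrableOn (fun x : ℝ => x ^ (-s) * (x ^ 2 - 1) ^ (-(1/2) : ℝ)) (Ioi 1) ∧
    ∫ x in Ioi (1:ℝ), x ^ (-s) * (x ^ 2 - 1) ^ (-(1/2) : ℝ) =
      (Real.sqrt π / 2) * (Real.Gamma (s/2) / Real.Gamma (s/2 + 1/2)) := by
  obtain ⟨hBint, hBval⟩ := betaIoo (a := s/2) (b := 1/2) (by linarith) (by norm_num)
  -- step 1: t ↦ t^2 on Ioo 0 1
  have hderiv1 : ∀ t ∈ Ioo (0:ℝ) 1, HasDerivWithinAt (fun t : ℝ => t ^ 2) (2 * t) (Ioo 0 1) t := by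
    intro t ht
    simpa using (hasDerivAt_pow 2 t).hasDerivWithinAt
  have hinj1 : InjOn (fun t : ℝ => t ^ 2) (Ioo 0 1) := by
    intro a ha b hb h
    simp only at h
    nlinarith [ha.1, hb.1]
  have heq1 : ∀ t ∈ Ioo (0:ℝ) 1,
      |2 * t| • ((t ^ 2) ^ (s/2 - 1) * (1 - t ^ 2) ^ (-(1/2):ℝ))
        = 2 * (t ^ (s - 1) * (1 - t ^ 2) ^ (-(1/2):ℝ)) := by
    intro t ht
    have ht0 := ht.1
    have h2 : ((t:ℝ) ^ 2) ^ (s/2 - 1) = t ^ (s - 2) := by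
      rw [← Real.rpow_natCast t 2, ← Real.rpow_mul ht0.le]
      congr 1
      push_cast; ring
    rw [smul_eq_mul, abs_of_nonneg (by linarith : (0:ℝ) ≤ 2 * t), h2]
    rw [show s - 2 = (s - 1) + (-1) by ring, Real.rpow_add ht0, Real.rpow_neg_one]
    field_simp
  have step1int : IntegrableOn (fun t : ℝ => t ^ (s - 1) * (1 - t ^ 2) ^ (-(1/2):ℝ)) (Ioo 0 1) := by
    have := (integrableOn_image_iff_integrableOn_abs_deriv_smul measurableSet_Ioo hderiv1 hinj1
      (fun u => u ^ (s/2 - 1) * (1 - u) ^ (-(1/2):ℝ))).mp (by rw [sq_image]; exact hBint.congr_fun (by intro x hx; norm_num) measurableSet_Ioo)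
    have h2 := IntegrableOn.congr_fun this heq1 measurableSet_Ioo
    exact IntegrableOn.congr_fun (h2.const_mul (2⁻¹ : ℝ)) (fun t ht => by ring) measurableSet_Ioo
  have step1 : ∫ t in Ioo (0:ℝ) 1, t ^ (s - 1) * (1 - t ^ 2) ^ (-(1/2):ℝ)
      = (1/2) * (Real.Gamma (s/2) * Real.Gamma (1/2) / Real.Gamma (s/2 + 1/2)) := by
    have himg := integral_image_eq_integral_abs_deriv_smul measurableSet_Ioo hderiv1 hinj1
      (fun u => u ^ (s/2 - 1) * (1 - u) ^ (-(1/2):ℝ))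
    rw [sq_image] at himg
    have : ∫ u in Ioo (0:ℝ) 1, u ^ (s/2 - 1) * (1 - u) ^ (-(1/2):ℝ)
        = Real.Gamma (s/2) * Real.Gamma (1/2) / Real.Gamma (s/2 + 1/2) := by
      rw [← hBval]
      exact setIntegral_congr_fun measurableSet_Ioo (fun x hx => by norm_num)
    rw [this] at himg
    rw [setIntegral_congr_fun measurableSet_Ioo heq1] at himg
    rw [integral_const_mul] at himg
    linarith
  -- step 2: t ↦ t⁻¹ from Ioo 0 1 onto Ioi 1
  have hderiv2 : ∀ t ∈ Ioo (0:ℝ) 1, HasDerivWithinAt (fun t : ℝ => t⁻¹) (-(t^2)⁻¹) (Ioo 0 1) t :=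
    fun t ht => (hasDerivAt_inv ht.1.ne').hasDerivWithinAt
  have hinj2 : InjOn (fun t : ℝ => t⁻¹) (Ioo 0 1) := by
    intro a ha b hb h
    simpa [inv_inj] using h
  have heq2 : ∀ t ∈ Ioo (0:ℝ) 1,
      |(-(t^2)⁻¹)| • ((t⁻¹) ^ (-s) * ((t⁻¹) ^ 2 - 1) ^ (-(1/2):ℝ))
        = t ^ (s - 1) * (1 - t ^ 2) ^ (-(1/2):ℝ) := by
    intro t ht
    have ht0 := ht.1
    have ht1 := ht.2
    have habs : |(-((t:ℝ)^2)⁻¹)| = (t^2)⁻¹ := by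
      rw [abs_neg, abs_of_nonneg (by positivity)]
    have h1 : ((t:ℝ)⁻¹) ^ (-s) = t ^ s := by
      rw [Real.inv_rpow ht0.le, ← Real.rpow_neg ht0.le, neg_neg]
    have h2 : ((t:ℝ)⁻¹) ^ 2 - 1 = (1 - t^2) / t^2 := by
      field_simp
    have h3 : ((1 - t^2) / t^2 : ℝ) ^ (-(1/2):ℝ) = (1 - t^2) ^ (-(1/2):ℝ) * t := by
      rw [Real.div_rpow (by nlinarith) (by positivity)]
      rw [show ((t:ℝ)^2) ^ (-(1/2):ℝ) = t⁻¹ by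
        rw [← Real.rpow_natCast t 2, ← Real.rpow_mul ht0.le]
        norm_num [Real.rpow_neg_one]]
      field_simp
    rw [smul_eq_mul, habs, h1, h2, h3]
    rw [show s = (s - 1) + 1 by ring, Real.rpow_add ht0, Real.rpow_one,
      show s - 1 + 1 - 1 = s - 1 by ring]
    field_simp
  have goalint : IntegrableOn (fun x : ℝ => x ^ (-s) * (x ^ 2 - 1) ^ (-(1/2) : ℝ)) (Ioi 1) := by
    rw [← inv_image]
    rw [integrableOn_image_iff_integrableOn_abs_deriv_smul measurableSet_Ioo hderiv2 hinj2]
    exact step1int.congr_fun (fun t ht => (heq2 t ht).symm) measurableSet_Ioo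
  refine ⟨goalint, ?_⟩
  have himg := integral_image_eq_integral_abs_deriv_smul measurableSet_Ioo hderiv2 hinj2
    (fun x : ℝ => x ^ (-s) * (x ^ 2 - 1) ^ (-(1/2) : ℝ))
  rw [inv_image] at himg
  rw [himg, setIntegral_congr_fun measurableSet_Ioo heq2, step1, Real.Gamma_one_half_eq]
  ring

lemma gamma_poch {x : ℝ} (hx : 0 < x) (n : ℕ) :
    Real.Gamma (x + n) = (ascPochhammer ℝ n).eval x * Real.Gamma x := by
  induction n with
  | zero => simp
  | succ n ih =>
    have hxn : (0:ℝ) < x + n := by positivity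
    rw [ascPochhammer_succ_right, Polynomial.eval_mul, Polynomial.eval_add, Polynomial.eval_X,
      Polynomial.eval_natCast]
    push_cast
    rw [show x + ((n:ℝ) + 1) = (x + n) + 1 by ring, Real.Gamma_add_one hxn.ne', ih]
    ring

lemma poch_pos {x : ℝ} (hx : 0 < x) (n : ℕ) : 0 < (ascPochhammer ℝ n).eval x :=
  ascPochhammer_pos n x hx

lemma poch_mono_arg (n : ℕ) :
    (ascPochhammer ℝ n).eval (3/4) ≤ (ascPochhammer ℝ n).eval (5/4) := by
  induction n with
  | zero => simp
  | succ n ih =>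
    rw [ascPochhammer_succ_right]
    simp only [Polynomial.eval_mul, Polynomial.eval_add, Polynomial.eval_X,
      Polynomial.eval_natCast]
    have h1 := poch_pos (by norm_num : (0:ℝ) < 3/4) n
    have h2 : (0:ℝ) ≤ 3/4 + n := by positivity
    nlinarith [mul_le_mul_of_nonneg_right ih h2, poch_pos (by norm_num : (0:ℝ) < 5/4) n]

/-- helper converting rpow form to sqrt form -/
lemma rpow_form {x : ℝ} (hx : 1 < x) (n : ℕ) :
    x ^ (-(2*(n:ℝ) + 3/2)) * (x ^ 2 - 1) ^ (-(1/2) : ℝ) =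
      Real.sqrt x / (Real.sqrt (x ^ 2 - 1) * x ^ 2 * (x ^ 2) ^ n) := by
  have hx0 : (0:ℝ) < x := lt_trans one_pos hx
  have h1 : (0:ℝ) < x ^ 2 - 1 := by nlinarith
  have e1 : x ^ (-(2*(n:ℝ) + 3/2)) = Real.sqrt x / x ^ (2*n+2 : ℕ) := by
    rw [show -(2*(n:ℝ) + 3/2) = 1/2 - ((2*n+2 : ℕ) : ℝ) by push_cast; ring,
      Real.rpow_sub hx0, Real.rpow_natCast, Real.sqrt_eq_rpow]
  have e2 : (x ^ 2 - 1) ^ (-(1/2) : ℝ) = (Real.sqrt (x ^ 2 - 1))⁻¹ := by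
    rw [Real.rpow_neg h1.le, Real.sqrt_eq_rpow]
  rw [e1, e2, show (2*n+2 : ℕ) = 2 + 2*n by ring, pow_add, pow_mul]
  have hs1 : (0:ℝ) < Real.sqrt (x^2-1) := Real.sqrt_pos.mpr h1
  have hs1' : Real.sqrt (x^2-1) ≠ 0 := hs1.ne'
  field_simp

lemma term_algebra (K c p34 p54 G34 G14 fn sp : ℝ) (h54 : p54 ≠ 0) (h14 : G14 ≠ 0)
    (hfn : fn ≠ 0) :
    K * c * (sp / 2 * (p34 * G34 / (p54 * (1/4 * G14)))) =
      2 * sp * K * (G34 / G14) * (p34 * fn / p54 * c / fn) := by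
  field_simp
  ring


end Aux

/-- The Gauss hypergeometric function `₂F₁(a, b, c; x)`. -/
noncomputable def hyp2F1 (a b c x : ℝ) : ℝ :=
  ∑' n : ℕ, ((ascPochhammer ℝ n).eval a * (ascPochhammer ℝ n).eval b /
      (ascPochhammer ℝ n).eval c) * x ^ n / (n.factorial : ℝ)

/-- For `r ∈ (0,1)`, `∫₁^∞ (√(1−r²) √x)/(√r √(x²−1) (x²−r²)) dx` converges and equals
`2√π (√(1−r²)/√r) (Γ(3/4)/Γ(1/4)) ₂F₁(3/4,1,5/4;r²)`. -/
theorem stmt5 (r : ℝ) (hr : r ∈ Set.Ioo (0 : ℝ) 1) :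
    IntegrableOn
        (fun x : ℝ => Real.sqrt (1 - r ^ 2) * Real.sqrt x /
          (Real.sqrt r * Real.sqrt (x ^ 2 - 1) * (x ^ 2 - r ^ 2))) (Set.Ioi 1) ∧
      ∫ x in Set.Ioi (1 : ℝ), Real.sqrt (1 - r ^ 2) * Real.sqrt x /
          (Real.sqrt r * Real.sqrt (x ^ 2 - 1) * (x ^ 2 - r ^ 2)) =
        2 * Real.sqrt Real.pi * (Real.sqrt (1 - r ^ 2) / Real.sqrt r) *
          (Real.Gamma (3 / 4) / Real.Gamma (1 / 4)) * hyp2F1 (3 / 4) 1 (5 / 4) (r ^ 2) := by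
  obtain ⟨hr0, hr1⟩ := hr
  have hc0 : (0:ℝ) < r ^ 2 := by positivity
  have hc1 : r ^ 2 < 1 := by nlinarith
  have hsr : (0:ℝ) < Real.sqrt r := Real.sqrt_pos.mpr hr0
  have hsc : (0:ℝ) < Real.sqrt (1 - r ^ 2) := Real.sqrt_pos.mpr (by linarith)
  set K : ℝ := Real.sqrt (1 - r ^ 2) / Real.sqrt r with hK
  have hK0 : 0 < K := div_pos hsc hsr
  set c : ℝ := r ^ 2 with hcdef
  -- the summands
  set F : ℕ → ℝ → ℝ := fun n x => K * c ^ n *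
      (Real.sqrt x / (Real.sqrt (x ^ 2 - 1) * x ^ 2 * (x ^ 2) ^ n)) with hF
  have hspos : ∀ n : ℕ, (0:ℝ) < 2*(n:ℝ) + 3/2 := fun n => by positivity
  -- integrability and value of each summand
  have hFint : ∀ n : ℕ, IntegrableOn (F n) (Ioi 1) := by
    intro n
    have h := ((Jlem (hspos n)).1.const_mul (K * c ^ n))
    refine IntegrableOn.congr_fun h (fun x hx => ?_) measurableSet_Ioi
    rw [rpow_form hx n]
  have hFval : ∀ n : ℕ, ∫ x in Ioi (1:ℝ), F n x =
      K * c ^ n * ((Real.sqrt π / 2) *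
        (Real.Gamma ((n:ℝ) + 3/4) / Real.Gamma ((n:ℝ) + 5/4))) := by
    intro n
    have h1 : ∫ x in Ioi (1:ℝ), F n x = ∫ x in Ioi (1:ℝ),
        K * c ^ n * (x ^ (-(2*(n:ℝ) + 3/2)) * (x ^ 2 - 1) ^ (-(1/2) : ℝ)) := by
      refine setIntegral_congr_fun measurableSet_Ioi (fun x hx => ?_)
      rw [rpow_form hx n]
    rw [h1, integral_const_mul, (Jlem (hspos n)).2,
      show (2*(n:ℝ) + 3/2)/2 = (n:ℝ) + 3/4 by ring,
      show (n:ℝ) + 3/4 + 1/2 = (n:ℝ) + 5/4 by ring]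
  -- pointwise series expansion
  have hpt : ∀ x ∈ Ioi (1:ℝ),
      Real.sqrt (1 - r ^ 2) * Real.sqrt x /
          (Real.sqrt r * Real.sqrt (x ^ 2 - 1) * (x ^ 2 - r ^ 2)) = ∑' n, F n x := by
    intro x hx
    have hx1 : (1:ℝ) < x := hx
    have hx0 : (0:ℝ) < x := lt_trans one_pos hx1
    have hx2 : (0:ℝ) < x ^ 2 - 1 := by nlinarith
    have hxc : (0:ℝ) < x ^ 2 - c := by nlinarith
    have hD : (0:ℝ) < Real.sqrt (x ^ 2 - 1) := Real.sqrt_pos.mpr hx2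
    have hq0 : (0:ℝ) ≤ c / x ^ 2 := by positivity
    have hq1 : c / x ^ 2 < 1 := by
      rw [div_lt_one (by positivity)]; nlinarith
    have e1 : ∀ n : ℕ, F n x =
        (K * Real.sqrt x / (Real.sqrt (x ^ 2 - 1) * x ^ 2)) * (c / x ^ 2) ^ n := by
      intro n
      rw [hF, div_pow]
      field_simp
    rw [tsum_congr e1, tsum_mul_left, tsum_geometric_of_lt_one hq0 hq1, hK]
    rw [eq_comm]
    rw [← hcdef]
    field_simp
  -- summability of the norms of the integrals
  set M : ℝ := K * ((Real.sqrt π / 2) *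
      (Real.Gamma (3/4) / Real.Gamma (5/4))) with hM
  have hG34 : (0:ℝ) < Real.Gamma (3/4) := Real.Gamma_pos_of_pos (by norm_num)
  have hG54 : (0:ℝ) < Real.Gamma (5/4) := Real.Gamma_pos_of_pos (by norm_num)
  have hG14 : (0:ℝ) < Real.Gamma (1/4) := Real.Gamma_pos_of_pos (by norm_num)
  have hGratio : ∀ n : ℕ, Real.Gamma ((n:ℝ) + 3/4) / Real.Gamma ((n:ℝ) + 5/4) ≤
      Real.Gamma (3/4) / Real.Gamma (5/4) := by
    intro n
    rw [show ((n:ℝ) + 3/4) = 3/4 + (n:ℕ) by push_cast; ring,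
      show ((n:ℝ) + 5/4) = 5/4 + (n:ℕ) by push_cast; ring,
      gamma_poch (by norm_num : (0:ℝ) < 3/4) n, gamma_poch (by norm_num : (0:ℝ) < 5/4) n]
    have p34 := poch_pos (by norm_num : (0:ℝ) < 3/4) n
    have p54 := poch_pos (by norm_num : (0:ℝ) < 5/4) n
    rw [div_le_div_iff₀ (by positivity) (by positivity)]
    have := poch_mono_arg n
    nlinarith [mul_le_mul_of_nonneg_right (poch_mono_arg n)
      (mul_nonneg hG34.le hG54.le)]
  have hGratio_pos : ∀ n : ℕ, (0:ℝ) < Real.Gamma ((n:ℝ) + 3/4) / Real.Gamma ((n:ℝ) + 5/4) :=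
    fun n => div_pos (Real.Gamma_pos_of_pos (by positivity)) (Real.Gamma_pos_of_pos (by positivity))
  have hnormint : ∀ n : ℕ, ∫ x in Ioi (1:ℝ), ‖F n x‖ = ∫ x in Ioi (1:ℝ), F n x := by
    intro n
    refine setIntegral_congr_fun measurableSet_Ioi (fun x hx => ?_)
    have hx1 : (1:ℝ) < x := hx
    have hx2 : (0:ℝ) < x ^ 2 - 1 := by nlinarith [lt_trans one_pos hx1]
    rw [Real.norm_eq_abs, abs_of_nonneg]
    rw [hF]
    have : (0:ℝ) ≤ Real.sqrt x / (Real.sqrt (x ^ 2 - 1) * x ^ 2 * (x ^ 2) ^ n) := by positivity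
    positivity
  have hsumm : Summable fun n : ℕ => ∫ x in Ioi (1:ℝ), ‖F n x‖ := by
    refine Summable.of_nonneg_of_le (fun n => ?_) (fun n => ?_)
      ((summable_geometric_of_lt_one hc0.le hc1).mul_left M)
    · rw [hnormint n, hFval n]
      have := hGratio_pos n
      positivity
    · rw [hnormint n, hFval n, hM]
      have h1 := hGratio n
      have h2 : (0:ℝ) ≤ c ^ n := by positivity
      have h3 : (0:ℝ) < Real.sqrt π := Real.sqrt_pos.mpr Real.pi_pos
      calc K * c ^ n * ((Real.sqrt π / 2) * (Real.Gamma ((n:ℝ) + 3/4) / Real.Gamma ((n:ℝ) + 5/4)))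
          ≤ K * c ^ n * ((Real.sqrt π / 2) * (Real.Gamma (3/4) / Real.Gamma (5/4))) := by
            apply mul_le_mul_of_nonneg_left _ (by positivity)
            apply mul_le_mul_of_nonneg_left h1 (by positivity)
        _ = K * ((Real.sqrt π / 2) * (Real.Gamma (3/4) / Real.Gamma (5/4))) * c ^ n := by ring
  -- swap integral and sum
  have hswap : ∫ x in Ioi (1:ℝ), ∑' n, F n x = ∑' n, ∫ x in Ioi (1:ℝ), F n x :=
    (integral_tsum_of_summable_integral_norm hFint hsumm).symm
  -- integrability of the original function
  have hintorig : IntegrableOn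
      (fun x : ℝ => Real.sqrt (1 - r ^ 2) * Real.sqrt x /
        (Real.sqrt r * Real.sqrt (x ^ 2 - 1) * (x ^ 2 - r ^ 2))) (Ioi 1) := by
    have hg : IntegrableOn (fun x : ℝ => (K / (1 - c)) *
        (x ^ (-(3/2) : ℝ) * (x ^ 2 - 1) ^ (-(1/2) : ℝ))) (Ioi 1) :=
      (Jlem (by norm_num : (0:ℝ) < 3/2)).1.const_mul _
    refine Integrable.mono hg ?_ ?_
    · have hcont : ContinuousOn (fun x : ℝ => Real.sqrt (1 - r ^ 2) * Real.sqrt x /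
          (Real.sqrt r * Real.sqrt (x ^ 2 - 1) * (x ^ 2 - r ^ 2))) (Ioi 1) := by
        apply ContinuousOn.div
        · exact (continuous_const.mul Real.continuous_sqrt).continuousOn
        · apply ContinuousOn.mul
          · exact (continuous_const.mul (Real.continuous_sqrt.comp
              ((continuous_pow 2).sub continuous_const))).continuousOn
          · exact ((continuous_pow 2).sub continuous_const).continuousOn
        · intro x hx
          have hx1 : (1:ℝ) < x := hx
          have hx2 : (0:ℝ) < x ^ 2 - 1 := by nlinarith
          have hxc : (0:ℝ) < x ^ 2 - r ^ 2 := by nlinarith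
          have hD : (0:ℝ) < Real.sqrt (x ^ 2 - 1) := Real.sqrt_pos.mpr hx2
          positivity
      exact hcont.aestronglyMeasurable measurableSet_Ioi
    · rw [ae_restrict_iff' measurableSet_Ioi]
      refine Filter.Eventually.of_forall (fun x hx => ?_)
      have hx1 : (1:ℝ) < x := hx
      have hx0 : (0:ℝ) < x := lt_trans one_pos hx1
      have hx2 : (0:ℝ) < x ^ 2 - 1 := by nlinarith
      have hxc : (0:ℝ) < x ^ 2 - c := by nlinarith
      have hD : (0:ℝ) < Real.sqrt (x ^ 2 - 1) := Real.sqrt_pos.mpr hx2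
      have hsx : (0:ℝ) ≤ Real.sqrt x := Real.sqrt_nonneg x
      have hrw : x ^ (-(3/2) : ℝ) * (x ^ 2 - 1) ^ (-(1/2) : ℝ) =
          Real.sqrt x / (Real.sqrt (x ^ 2 - 1) * x ^ 2) := by
        have := rpow_form hx1 0
        simpa using this
      have h1c : (0:ℝ) < 1 - c := by linarith
      have hnum : (0:ℝ) ≤ Real.sqrt (1 - r ^ 2) * Real.sqrt x := by positivity
      have hden : (0:ℝ) ≤ Real.sqrt r * Real.sqrt (x ^ 2 - 1) * (x ^ 2 - c) :=
        mul_nonneg (by positivity) hxc.le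
      have h3 : (0:ℝ) ≤ K / (1 - c) * (Real.sqrt x / (Real.sqrt (x ^ 2 - 1) * x ^ 2)) :=
        mul_nonneg (div_nonneg hK0.le h1c.le) (div_nonneg hsx (by positivity))
      rw [Real.norm_eq_abs, Real.norm_eq_abs, hrw]
      rw [abs_of_nonneg (div_nonneg hnum hden), abs_of_nonneg h3]
      have hD2 : (0:ℝ) < Real.sqrt r * Real.sqrt (x ^ 2 - 1) * ((1 - c) * x ^ 2) := by
        have : (0:ℝ) < 1 - c := by linarith
        positivity
      have hDle : Real.sqrt r * Real.sqrt (x ^ 2 - 1) * ((1 - c) * x ^ 2) ≤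
          Real.sqrt r * Real.sqrt (x ^ 2 - 1) * (x ^ 2 - c) := by
        apply mul_le_mul_of_nonneg_left _ (by positivity)
        have h1x : (1:ℝ) ≤ x ^ 2 := by linarith
        have hcx : c ≤ c * x ^ 2 := le_mul_of_one_le_right hc0.le h1x
        have key : (1 - c) * x ^ 2 = x ^ 2 - c * x ^ 2 := by ring
        rw [key]
        linarith
      calc Real.sqrt (1 - r ^ 2) * Real.sqrt x /
            (Real.sqrt r * Real.sqrt (x ^ 2 - 1) * (x ^ 2 - r ^ 2))
          ≤ Real.sqrt (1 - r ^ 2) * Real.sqrt x /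
            (Real.sqrt r * Real.sqrt (x ^ 2 - 1) * ((1 - c) * x ^ 2)) := by
            exact div_le_div_of_nonneg_left (by positivity) hD2 hDle
        _ = K / (1 - c) * (Real.sqrt x / (Real.sqrt (x ^ 2 - 1) * x ^ 2)) := by
            rw [hK]
            field_simp
            ring
  refine ⟨hintorig, ?_⟩
  -- compute the integral
  rw [setIntegral_congr_fun measurableSet_Ioi hpt, hswap]
  clear hpt hswap hsumm hnormint hGratio hGratio_pos hFint hintorig hspos
  clear_value F M c K
  -- evaluate the series
  have hG54eq : Real.Gamma (5/4) = (1/4) * Real.Gamma (1/4) := by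
    rw [show (5/4 : ℝ) = 1/4 + 1 by norm_num, Real.Gamma_add_one (by norm_num)]
  have hterm : ∀ n : ℕ, ∫ x in Ioi (1:ℝ), F n x =
      (2 * Real.sqrt π * K * (Real.Gamma (3/4) / Real.Gamma (1/4))) *
        (((ascPochhammer ℝ n).eval (3/4 : ℝ) * (ascPochhammer ℝ n).eval (1 : ℝ) /
          (ascPochhammer ℝ n).eval (5/4 : ℝ)) * c ^ n / (n.factorial : ℝ)) := by
    intro n
    rw [hFval n,
      show ((n:ℝ) + 3/4) = 3/4 + (n:ℕ) by push_cast; ring,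
      show ((n:ℝ) + 5/4) = 5/4 + (n:ℕ) by push_cast; ring,
      gamma_poch (by norm_num : (0:ℝ) < 3/4) n, gamma_poch (by norm_num : (0:ℝ) < 5/4) n,
      ascPochhammer_eval_one, hG54eq]
    have p54 := poch_pos (by norm_num : (0:ℝ) < 5/4) n
    have hfac : (0:ℝ) < (n.factorial : ℝ) := by exact_mod_cast n.factorial_pos
    exact term_algebra _ _ _ _ _ _ _ _ p54.ne' hG14.ne' hfac.ne'
  rw [tsum_congr hterm, tsum_mul_left, hyp2F1]
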